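/- Centrality measure contraction: under the Newton step with h, f satisfying hᵢsᵢ + fᵢxᵢ = μ′ − xᵢsᵢ and hᵀf = 0, where μ′ = (1−δ)μ with δ = 1/(8√n), if σ² = ∑ᵢ (xᵢsᵢ/μ − 1)² ≤ 1/4 and x, s > 0, then σ′² = ∑ᵢ ((xᵢ+hᵢ)(sᵢ+fᵢ)/μ′ − 1)² ≤ 1/4. -/

import Mathlib

set_option maxHeartbeats 800000


theorem centrality_contraction {n : ℕ} (x s h f : Fin n → ℝ) (μ : ℝ)
    (hx : ∀ i, 0 < x i) (hs : ∀ i, 0 < s i) (hμ : 0 < μ)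
    (hσ : ∑ i, (x i * s i / μ - 1) ^ 2 ≤ 1 / 4)
    (hstep : ∀ i, h i * s i + f i * x i =
      (1 - 1 / (8 * Real.sqrt n)) * μ - x i * s i)
    (horth : ∑ i, h i * f i = 0) :
    ∑ i, ((x i + h i) * (s i + f i) / ((1 - 1 / (8 * Real.sqrt n)) * μ) - 1) ^ 2
      ≤ 1 / 4 := by
  rcases Nat.eq_zero_or_pos n with hn | hn
  · subst hn; simp
  have hsn : (1:ℝ) ≤ Real.sqrt n := by
    rw [show (1:ℝ) = Real.sqrt 1 by simp]
    exact Real.sqrt_le_sqrt (by exact_mod_cast hn)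
  have hsnpos : (0:ℝ) < Real.sqrt n := by linarith
  have hsq : Real.sqrt n ^ 2 = (n:ℝ) := Real.sq_sqrt (by positivity)
  set δ : ℝ := 1 / (8 * Real.sqrt n) with hδdef
  have hδpos : 0 < δ := by positivity
  have hδn : δ * Real.sqrt n = 1/8 := by
    rw [hδdef]; field_simp
  have hδ2 : (n:ℝ) * δ^2 = 1/64 := by
    have e : (n:ℝ) * δ^2 = (δ * Real.sqrt n)^2 := by rw [mul_pow, hsq]; ring
    rw [e, hδn]; norm_num
  have hδle : δ ≤ 1/8 := by
    rw [hδdef, div_le_div_iff₀ (by positivity) (by norm_num)]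
    linarith
  set μ' : ℝ := (1 - δ) * μ with hμ'def
  have hμ'pos : 0 < μ' := mul_pos (by linarith) hμ
  -- each product x_i s_i is at least μ/2
  have hv : ∀ i, μ/2 ≤ x i * s i := by
    intro i
    have h1 : (x i * s i / μ - 1)^2 ≤ 1/4 := by
      refine le_trans ?_ hσ
      exact Finset.single_le_sum (f := fun j => (x j * s j / μ - 1)^2)
        (fun j _ => sq_nonneg _) (Finset.mem_univ i)
    have h2 : x i * s i = (x i * s i / μ) * μ := by field_simp
    have ht : 1/2 ≤ x i * s i / μ := by nlinarith [h1]
    calc μ/2 = (1/2) * μ := by ring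
    _ ≤ (x i * s i / μ) * μ := mul_le_mul_of_nonneg_right ht hμ.le
    _ = x i * s i := h2.symm
  -- key product identity
  have key : ∀ i, (x i + h i) * (s i + f i) = μ' + h i * f i := by
    intro i
    have e : (x i + h i) * (s i + f i)
        = x i * s i + (h i * s i + f i * x i) + h i * f i := by ring
    rw [e, hstep i]; ring
  -- rewrite the goal sum
  have goalrw : ∑ i, ((x i + h i) * (s i + f i) / μ' - 1) ^ 2
      = ∑ i, (h i * f i)^2 / μ'^2 := by
    refine Finset.sum_congr rfl (fun i _ => ?_)
    rw [key i]
    rw [div_sub' (ne_of_gt hμ'pos)]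
    rw [div_pow]
    ring_nf
  rw [goalrw]
  -- bound each h i * f i above by ρ i
  set ρ : Fin n → ℝ := fun i => (μ' - x i * s i)^2 / (2*μ) with hρdef
  have hρnn : ∀ i, 0 ≤ ρ i := fun i => by positivity
  have hρ : ∀ i, h i * f i ≤ ρ i := by
    intro i
    rw [hρdef]
    rw [le_div_iff₀ (by positivity)]
    have e := hstep i
    have e2 : (μ' - x i * s i)^2 = (h i * s i + f i * x i)^2 := by
      rw [e, hμ'def]
    rw [e2]
    rcases le_or_gt 0 (h i * f i) with hA | hA
    · nlinarith [sq_nonneg (h i * s i - f i * x i), hv i, hμ, hA]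
    · nlinarith [sq_nonneg (h i * s i + f i * x i), hμ, hA]
  -- bound the sum of ρ
  have hρsum : ∑ i, ρ i ≤ 25 * μ / 128 := by
    have e1 : ∀ i, ρ i = (μ^2 * ((x i * s i / μ - 1) + δ)^2) / (2*μ) := by
      intro i
      rw [hρdef]
      congr 1
      rw [hμ'def]
      field_simp
      ring
    have hA : ∑ i, (x i * s i / μ - 1) ≤ Real.sqrt n / 2 := by
      have hcs := sq_sum_le_card_mul_sum_sq (s := (Finset.univ : Finset (Fin n)))
        (f := fun i => x i * s i / μ - 1)
      simp only [Finset.card_univ, Fintype.card_fin] at hcs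
      have h2 : (∑ i, (x i * s i / μ - 1))^2 ≤ (n:ℝ) / 4 := by
        calc (∑ i, (x i * s i / μ - 1))^2 ≤ (n:ℝ) * ∑ i, (x i * s i / μ - 1)^2 := hcs
        _ ≤ (n:ℝ) * (1/4) := by
            apply mul_le_mul_of_nonneg_left hσ (by positivity)
        _ = (n:ℝ)/4 := by ring
      nlinarith [hsq, hsnpos, sq_nonneg (∑ i, (x i * s i / μ - 1) - Real.sqrt n / 2)]
    have expand : ∑ i, ((x i * s i / μ - 1) + δ)^2
        = ∑ i, (x i * s i / μ - 1)^2 + 2*δ*(∑ i, (x i * s i / μ - 1)) + (n:ℝ)*δ^2 := by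
      have : ∀ i, ((x i * s i / μ - 1) + δ)^2
          = (x i * s i / μ - 1)^2 + 2*δ*(x i * s i / μ - 1) + δ^2 := fun i => by ring
      simp_rw [this]
      rw [Finset.sum_add_distrib, Finset.sum_add_distrib, ← Finset.mul_sum,
        Finset.sum_const, Finset.card_univ, Fintype.card_fin, nsmul_eq_mul]
    have hbound : ∑ i, ((x i * s i / μ - 1) + δ)^2 ≤ 25/64 := by
      rw [expand]
      have t1 : 2*δ*(∑ i, (x i * s i / μ - 1)) ≤ 1/8 := by
        calc 2*δ*(∑ i, (x i * s i / μ - 1)) ≤ 2*δ*(Real.sqrt n / 2) :=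
              mul_le_mul_of_nonneg_left hA (by positivity)
        _ = δ * Real.sqrt n := by ring
        _ = 1/8 := hδn
      linarith [hσ, hδ2]
    calc ∑ i, ρ i = (μ^2 * ∑ i, ((x i * s i / μ - 1) + δ)^2) / (2*μ) := by
          simp_rw [e1]
          rw [← Finset.sum_div, ← Finset.mul_sum]
    _ ≤ (μ^2 * (25/64)) / (2*μ) := by
        gcongr
    _ = 25 * μ / 128 := by field_simp; ring
  -- positive part sum
  set P : ℝ := ∑ i, max (h i * f i) 0 with hPdef
  have hPnn : 0 ≤ P := Finset.sum_nonneg fun i _ => le_max_right _ _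
  have hPle : P ≤ ∑ i, ρ i :=
    Finset.sum_le_sum fun i _ => max_le (hρ i) (hρnn i)
  have habs : ∑ i, |h i * f i| = 2*P := by
    have e : ∀ a : ℝ, |a| = 2 * max a 0 - a := by
      intro a
      rcases le_total 0 a with ha | ha
      · rw [abs_of_nonneg ha, max_eq_left ha]; ring
      · rw [abs_of_nonpos ha, max_eq_right ha]; ring
    simp_rw [e]
    rw [Finset.sum_sub_distrib, ← Finset.mul_sum, horth, hPdef]
    ring
  have hsumsq : ∑ i, (h i * f i)^2 ≤ (2*P)^2 := by
    calc ∑ i, (h i * f i)^2 = ∑ i, |h i * f i|^2 := by simp only [sq_abs]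
    _ ≤ (∑ i, |h i * f i|)^2 :=
        Finset.sum_sq_le_sq_sum_of_nonneg fun i _ => abs_nonneg _
    _ = (2*P)^2 := by rw [habs]
  -- final numeric comparison
  have hfinal : ∑ i, (h i * f i)^2 ≤ μ'^2 / 4 := by
    have h1 : (2*P)^2 ≤ (25*μ/64)^2 := by
      have : 2*P ≤ 25*μ/64 := by
        calc 2*P ≤ 2 * (25*μ/128) := by linarith [hPle, hρsum]
        _ = 25*μ/64 := by ring
      nlinarith [hPnn]
    have h2 : (25*μ/64)^2 ≤ μ'^2/4 := by
      rw [hμ'def]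
      nlinarith [hμ, hδle, hδpos]
    linarith [hsumsq]
  rw [← Finset.sum_div]
  rw [div_le_iff₀ (by positivity)]
  calc ∑ i, (h i * f i)^2 ≤ μ'^2/4 := hfinal
  _ = 1/4 * μ'^2 := by ring
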